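/- arXiv:0810.0532 — 2 statements merged into one kernel-verified Lean document; each statement's English description precedes it below -/
import Mathlib

section
/- Let I be a finite index set and w : I → ℝ a weight function with w(e) > 0 for every e ∈ I and satisfying the superincreasing condition w(e) ≥ Σ_{e' ∈ I : w(e') < w(e)} w(e') for every e ∈ I. Then for any two subsets S, T ⊆ I with |S| = |T|, if the sequence of weights of the elements of S sorted in nonincreasing order is lexicographically strictly smaller than the corresponding sorted sequence for T, then Σ_{e ∈ S} w(e) < Σ_{e ∈ T} w(e). -/
/-- The weights of the elements of a finite set `S`, sorted in nonincreasing order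
(nondecreasing sort, then reversed). -/
noncomputable def sortedWeights {I : Type*} (w : I → ℝ) (S : Finset I) : List ℝ :=
  (Multiset.sort (S.val.map w) (· ≤ ·)).reverse

private lemma lex_decomp {l1 l2 : List ℝ} (h : List.Lex (· < ·) l1 l2)
    (hlen : l1.length = l2.length) :
    ∃ p a b s t, l1 = p ++ a :: s ∧ l2 = p ++ b :: t ∧ a < b ∧ s.length = t.length := by
  induction h with
  | nil => simp at hlen
  | @cons a l1' l2' h ih =>
      obtain ⟨p, x, y, s, t, h1, h2, hab, hst⟩ := ih (by simpa using hlen)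
      exact ⟨a :: p, x, y, s, t, by simp [h1], by simp [h2], hab, hst⟩
  | @rel a l1' b l2' hab =>
      exact ⟨[], a, b, l1', l2', rfl, rfl, hab, by simpa using hlen⟩

private lemma tail_sum_le {I : Type*} [Fintype I] [DecidableEq I]
    (w : I → ℝ) (hpos : ∀ e, 0 < w e)
    (hsuper : ∀ e, (∑ e' ∈ Finset.univ.filter (fun e' => w e' < w e), w e') ≤ w e)
    (S : Finset I) (m : Multiset ℝ) (hm : m ≤ S.val.map w)
    (e₀ : I) (hlt : ∀ x ∈ m, x < w e₀) : m.sum ≤ w e₀ := by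
  classical
  set n : Multiset ℝ := (S.val.map w).filter (· < w e₀) with hn
  have hmn : m ≤ n := Multiset.le_filter.mpr ⟨hm, hlt⟩
  have h1 : m.sum ≤ n.sum := by
    have hcanc : n - m + m = n := tsub_add_cancel_of_le hmn
    have : n.sum = (n - m).sum + m.sum := by rw [← Multiset.sum_add, hcanc]
    rw [this]
    have : (0:ℝ) ≤ (n - m).sum := by
      apply Multiset.sum_nonneg
      intro x hx
      have : x ∈ n := Multiset.mem_of_le (Multiset.sub_le_self _ _) hx
      rw [hn, Multiset.mem_filter, Multiset.mem_map] at this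
      obtain ⟨⟨e, _, rfl⟩, _⟩ := this
      exact (hpos e).le
    linarith
  have hfil : n = ((S.filter (fun e => w e < w e₀)).val).map w := by
    rw [hn, Multiset.filter_map, Finset.filter_val]
    rfl
  have h2 : n.sum = ∑ e ∈ S.filter (fun e => w e < w e₀), w e := by
    rw [hfil]; rfl
  have h3 : ∑ e ∈ S.filter (fun e => w e < w e₀), w e ≤
      ∑ e' ∈ Finset.univ.filter (fun e' => w e' < w e₀), w e' := by
    apply Finset.sum_le_sum_of_subset_of_nonneg
    · exact Finset.filter_subset_filter _ (Finset.subset_univ S)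
    · intro i _ _; exact (hpos i).le
  calc m.sum ≤ n.sum := h1
    _ = _ := h2
    _ ≤ _ := h3
    _ ≤ w e₀ := hsuper e₀

/-- For a positive, superincreasing weight function `w` on a finite index set `I`
(each weight is at least the sum of all strictly smaller weights), if two subsets
`S` and `T` of equal cardinality have the property that the nonincreasingly sorted
weight sequence of `S` is lexicographically strictly smaller than that of `T`, then
the total weight of `S` is strictly smaller than the total weight of `T`. -/
theorem superincreasing_lex_lt_sum {I : Type*} [Fintype I] [DecidableEq I]
    (w : I → ℝ) (hpos : ∀ e, 0 < w e)
    (hsuper : ∀ e, (∑ e' ∈ Finset.univ.filter (fun e' => w e' < w e), w e') ≤ w e)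
    (S T : Finset I) (hcard : S.card = T.card)
    (hlex : List.Lex (· < ·) (sortedWeights w S) (sortedWeights w T)) :
    ∑ e ∈ S, w e < ∑ e ∈ T, w e := by
  classical
  set l1 := sortedWeights w S with hl1
  set l2 := sortedWeights w T with hl2
  have hm1 : (l1 : Multiset ℝ) = S.val.map w := by
    rw [hl1, sortedWeights, Multiset.coe_reverse, Multiset.sort_eq]
  have hm2 : (l2 : Multiset ℝ) = T.val.map w := by
    rw [hl2, sortedWeights, Multiset.coe_reverse, Multiset.sort_eq]
  have hsum1 : l1.sum = ∑ e ∈ S, w e := by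
    rw [Finset.sum, ← hm1, Multiset.sum_coe]
  have hsum2 : l2.sum = ∑ e ∈ T, w e := by
    rw [Finset.sum, ← hm2, Multiset.sum_coe]
  have hlen : l1.length = l2.length := by
    have h1 := congrArg Multiset.card hm1
    have h2 := congrArg Multiset.card hm2
    simp only [Multiset.coe_card, Multiset.card_map] at h1 h2
    rw [h1, h2]; exact hcard
  obtain ⟨p, a, b, s, t, he1, he2, hab, hst⟩ := lex_decomp hlex hlen
  -- l1 sorted nonincreasing
  have hsort1 : List.Pairwise (fun x y => y ≤ x) l1 := by
    rw [hl1, sortedWeights, List.pairwise_reverse]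
    exact Multiset.pairwise_sort _ _
  have hsle : ∀ x ∈ s, x ≤ a := by
    have hsub : (a :: s).Sublist l1 := by rw [he1]; exact List.sublist_append_right _ _
    have := (List.pairwise_cons.mp (List.Pairwise.sublist hsub hsort1)).1
    intro x hx; exact this x hx
  -- b comes from some element of T
  obtain ⟨e₀, _, hbe⟩ : ∃ e₀ ∈ T.val, w e₀ = b := by
    have hb : b ∈ (l2 : Multiset ℝ) := by rw [he2]; simp
    rw [hm2, Multiset.mem_map] at hb
    exact hb
  -- tail sum bound
  have htail : (a :: s : Multiset ℝ).sum ≤ w e₀ := by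
    apply tail_sum_le w hpos hsuper S
    · rw [← hm1, he1]
      exact ((List.sublist_append_right p (a :: s)).subperm)
    · intro x hx
      rw [Multiset.mem_coe, List.mem_cons] at hx
      rcases hx with rfl | hx
      · rw [hbe]; exact hab
      · exact lt_of_le_of_lt (hsle x (by exact_mod_cast hx)) (hbe ▸ hab)
  -- entries of t are positive
  have htpos : ∀ x ∈ t, (0:ℝ) < x := by
    intro x hx
    have : x ∈ (l2 : Multiset ℝ) := by rw [he2]; simp [hx]
    rw [hm2, Multiset.mem_map] at this
    obtain ⟨e, _, rfl⟩ := this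
    exact hpos e
  rw [← hsum1, ← hsum2, he1, he2, List.sum_append, List.sum_append]
  have htail' : (a :: s : List ℝ).sum ≤ b := by
    rw [Multiset.sum_coe] at htail
    rw [← hbe]; exact htail
  have key : (a :: s).sum < (b :: t).sum := by
    rcases t with _ | ⟨y, ys⟩
    · have hs : s = [] := List.length_eq_zero_iff.mp (by simpa using hst)
      subst hs; simpa using hab
    · have h1 : (0:ℝ) < y := htpos y (by simp)
      have h2 : (0:ℝ) ≤ ys.sum := List.sum_nonneg fun x hx => (htpos x (by simp [hx])).le
      simp only [List.sum_cons] at htail' ⊢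
      linarith
  linarith
end

section
/- For any finite number n of agents and m of resources with nonnegative atomic demands r(i,o) ≥ 0, there exists a leximin-maximal admissible allocation in which every agent receives at most one resource (every bundle has cardinality at most 1). -/
/-- Max-utility with atomic demands: the utility of agent `i` for a bundle `S` is the
largest demand `r i o` over `o ∈ S`, and `0` for the empty bundle. -/
noncomputable def maxUtil {n m : ℕ} (r : Fin n → Fin m → ℝ) (i : Fin n)
    (S : Finset (Fin m)) : ℝ :=
  S.fold max 0 (r i)

/-- An allocation is admissible (preemption constraint) if bundles of distinct agents
are pairwise disjoint. -/
def Admissible {n m : ℕ} (a : Fin n → Finset (Fin m)) : Prop :=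
  ∀ i j, i ≠ j → Disjoint (a i) (a j)

/-- The nondecreasing rearrangement `u↑` of a vector. -/
noncomputable def sortedVec {n : ℕ} (u : Fin n → ℝ) : Fin n → ℝ :=
  u ∘ Tuple.sort u

/-- `LeximinLT v u` means `v ≺_leximin u`: there is an index `i` such that the
nondecreasing rearrangements agree strictly before `i` and `v↑ i < u↑ i`. -/
noncomputable def LeximinLT {n : ℕ} (v u : Fin n → ℝ) : Prop :=
  ∃ i : Fin n, (∀ j < i, sortedVec v j = sortedVec u j) ∧ sortedVec v i < sortedVec u i

/-- A matching between agents and resources: each agent and each resource occurs in at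
most one pair. -/
def IsMatching {n m : ℕ} (M : Finset (Fin n × Fin m)) : Prop :=
  ∀ p ∈ M, ∀ q ∈ M, p ≠ q → p.1 ≠ q.1 ∧ p.2 ≠ q.2

/-- The allocation induced by a matching: agent `i` receives the (at most one) resource
matched to it. -/
def allocOf {n m : ℕ} (M : Finset (Fin n × Fin m)) (i : Fin n) : Finset (Fin m) :=
  (M.filter fun p => p.1 = i).image Prod.snd

private lemma maxUtil_eq_of_argmax {n m : ℕ} (r : Fin n → Fin m → ℝ) (hr : ∀ i o, 0 ≤ r i o)
    (i : Fin n) {S : Finset (Fin m)} {o : Fin m} (ho : o ∈ S)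
    (hmax : ∀ o' ∈ S, r i o' ≤ r i o) : maxUtil r i S = r i o := by
  refine le_antisymm ?_ ?_
  · rw [maxUtil, Finset.fold_max_le]
    exact ⟨hr i o, hmax⟩
  · rw [maxUtil, Finset.le_fold_max]
    exact Or.inr ⟨o, ho, le_rfl⟩

/-- For agents with max-utility functions and nonnegative atomic demands, there exists
a leximin-maximal admissible allocation in which every agent receives at most one
resource. -/
theorem exists_leximinMaximal_card_le_one {n m : ℕ}
    (r : Fin n → Fin m → ℝ) (hr : ∀ i o, 0 ≤ r i o) :
    ∃ a : Fin n → Finset (Fin m), Admissible a ∧ (∀ i, (a i).card ≤ 1) ∧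
      ¬ ∃ a' : Fin n → Finset (Fin m), Admissible a' ∧
          LeximinLT (fun i => maxUtil r i (a i)) (fun i => maxUtil r i (a' i)) := by
  classical
  letI PO : PartialOrder (Lex (Fin n → ℝ)) :=
    @Pi.instPartialOrderLexForallOfLinearOrder (Fin n) (fun _ => ℝ) Fin.instLinearOrder
      (fun _ => inferInstance)
  set f : (Fin n → Finset (Fin m)) → Lex (Fin n → ℝ) :=
    fun a => toLex (sortedVec (fun i => maxUtil r i (a i))) with hf
  set s : Finset (Fin n → Finset (Fin m)) := Finset.univ.filter (fun a => Admissible a) with hs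
  have hsne : (s.image f).Nonempty := by
    refine ⟨f (fun _ => ∅), Finset.mem_image_of_mem _ ?_⟩
    simp only [hs, Finset.mem_filter, Finset.mem_univ, true_and]
    intro i j _; simp
  obtain ⟨t, ht, htmax⟩ := (s.image f).exists_maximal hsne
  obtain ⟨a, ha, hat⟩ := Finset.mem_image.1 ht
  have haAdm : Admissible a := by simpa [hs] using ha
  have key : ∀ i : Fin n, ∃ T : Finset (Fin m), T ⊆ a i ∧ T.card ≤ 1 ∧
      maxUtil r i T = maxUtil r i (a i) := by
    intro i
    rcases (a i).eq_empty_or_nonempty with h | h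
    · exact ⟨∅, by simp [h]⟩
    · obtain ⟨o, ho, hmax⟩ := Finset.exists_max_image (a i) (r i) h
      refine ⟨{o}, by simpa using ho, by simp, ?_⟩
      rw [maxUtil_eq_of_argmax r hr i ho hmax, maxUtil, Finset.fold_singleton]
      exact max_eq_left (hr i o)
  choose b hb1 hb2 hb3 using key
  refine ⟨b, ?_, hb2, ?_⟩
  · intro i j hij
    exact (haAdm i j hij).mono (hb1 i) (hb1 j)
  · rintro ⟨a', ha', hlex⟩
    have hUb : (fun i => maxUtil r i (b i)) = (fun i => maxUtil r i (a i)) := funext hb3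
    rw [hUb] at hlex
    obtain ⟨i, h1, h2⟩ := hlex
    have hlt0 : Pi.Lex (· < ·) (fun {_} => (· < ·))
        (sortedVec (fun i => maxUtil r i (a i)))
        (sortedVec (fun i => maxUtil r i (a' i))) := ⟨i, h1, h2⟩
    have hlt : f a < f a' := hlt0
    have hmem : a' ∈ s := by
      simp only [hs, Finset.mem_filter, Finset.mem_univ, true_and]
      exact ha'
    have hlt' : t < f a' := hat ▸ hlt
    exact lt_irrefl _ (lt_of_lt_of_le hlt' (htmax (Finset.mem_image_of_mem f hmem) hlt'.le))
end
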